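/- Let H be a union of vertex-disjoint alternating paths and cycles formed by two matchings N and M' in a graph, where |N| \geq |M'| + s. Then there are at least s vertex-disjoint paths in H that alternate N-M'-...-M'-N, starting and ending with an N-edge, with both endpoints not covered by M'. Moreover, for any L, at most 2|M'|/(L-2) of these paths have length more than L, so at least s - 2|M'|/(L-2) of them have length at most L. -/

import Mathlib

open Finset
open scoped Classical

section Defs

variable {V C E : Type*}

/-- The two endpoints of an edge of a multigraph given by endpoint functions `e₁ e₂`. -/
def edgeEnds [DecidableEq V] (e₁ e₂ : E → V) (e : E) : Finset V := {e₁ e, e₂ e}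

/-- A finite set of edges is a matching: all edges are non-loops and pairwise vertex-disjoint. -/
def IsMatchingE [DecidableEq V] (e₁ e₂ : E → V) (M : Finset E) : Prop :=
  (∀ e ∈ M, e₁ e ≠ e₂ e) ∧
  ∀ a ∈ M, ∀ b ∈ M, a ≠ b → Disjoint (edgeEnds e₁ e₂ a) (edgeEnds e₁ e₂ b)

/-- A set of edges is rainbow: all its edges have pairwise distinct colours. -/
def IsRainbow (col : E → C) (M : Finset E) : Prop := Set.InjOn col ↑M

/-- The colour class of colour `c`: the set of all edges of colour `c`. -/
noncomputable def colourClass [Fintype E] (col : E → C) (c : C) : Finset E :=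
  Finset.univ.filter fun e => col e = c

/-- The set of vertices covered by a set of edges `M`. -/
def matchedVerts [DecidableEq V] (e₁ e₂ : E → V) (M : Finset E) : Finset V :=
  M.biUnion (edgeEnds e₁ e₂)

/-- The set of vertices spanned by the colour class of `c`
(i.e. incident to at least one edge of colour `c`). -/
noncomputable def spannedVerts [Fintype V] [DecidableEq V] [Fintype E]
    (e₁ e₂ : E → V) (col : E → C) (c : C) : Finset V :=
  Finset.univ.filter fun v => ∃ e, col e = c ∧ (e₁ e = v ∨ e₂ e = v)

/-- `u` and `v` are distinct vertices joined by an edge of colour `c`. -/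
def adjOfColour (e₁ e₂ : E → V) (col : E → C) (c : C) (u v : V) : Prop :=
  u ≠ v ∧ ∃ e, col e = c ∧ ((e₁ e = u ∧ e₂ e = v) ∨ (e₁ e = v ∧ e₂ e = u))

/-- The colour class of `c` is a vertex-disjoint union of (non-trivial) cliques:
whenever `uv` and `vw` are edges of colour `c` with `u ≠ w`, also `uw` is an
edge of colour `c`. -/
def IsCliqueUnion (e₁ e₂ : E → V) (col : E → C) (c : C) : Prop :=
  ∀ u v w, adjOfColour e₁ e₂ col c u v → adjOfColour e₁ e₂ col c v w → u ≠ w →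
    adjOfColour e₁ e₂ col c u w

end Defs

section AltPaths

variable {V E : Type*}

/-- `es` is an alternating `N-M'-⋯-M'-N` path (a list of edges, of odd length,
edges at even positions in `N` and at odd positions in `M'`, consecutive edges
meeting in exactly one vertex and non-consecutive edges vertex-disjoint). -/
def IsAltNMPath [DecidableEq V] (e₁ e₂ : E → V) (N M' : Finset E) (es : List E) : Prop :=
  es ≠ [] ∧ es.length % 2 = 1 ∧
  (∀ i : ℕ, ∀ h : i < es.length,
    (if i % 2 = 0 then es.get ⟨i, h⟩ ∈ N else es.get ⟨i, h⟩ ∈ M')) ∧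
  (∀ i : ℕ, ∀ h : i + 1 < es.length,
    (edgeEnds e₁ e₂ (es.get ⟨i, Nat.lt_of_succ_lt h⟩) ∩
      edgeEnds e₁ e₂ (es.get ⟨i + 1, h⟩)).card = 1) ∧
  (∀ i j : ℕ, ∀ hi : i < es.length, ∀ hj : j < es.length, i + 2 ≤ j →
    Disjoint (edgeEnds e₁ e₂ (es.get ⟨i, hi⟩)) (edgeEnds e₁ e₂ (es.get ⟨j, hj⟩)))

/-- Both endpoints of the path `es` are uncovered by `M'`. -/
def FreeEndpoints [DecidableEq V] (e₁ e₂ : E → V) (M' : Finset E) (es : List E) : Prop :=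
  (∀ f, es.head? = some f → ∃ u ∈ edgeEnds e₁ e₂ f, u ∉ matchedVerts e₁ e₂ M') ∧
  (∀ f, es.getLast? = some f → ∃ u ∈ edgeEnds e₁ e₂ f, u ∉ matchedVerts e₁ e₂ M') ∧
  (∀ f, es = [f] → ∀ u ∈ edgeEnds e₁ e₂ f, u ∉ matchedVerts e₁ e₂ M')

end AltPaths

section Helpers
variable {V E : Type*} [DecidableEq V] {e₁ e₂ : E → V} {N M' : Finset E} {es : List E}

lemma edgeEnds_card {e : E} (h : e₁ e ≠ e₂ e) : (edgeEnds e₁ e₂ e).card = 2 := by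
  rw [edgeEnds, Finset.card_insert_of_notMem (by simpa using h), Finset.card_singleton]

lemma edgeEnds_nonempty (e : E) : (edgeEnds e₁ e₂ e).Nonempty := ⟨e₁ e, by simp [edgeEnds]⟩

lemma mem_matched {M : Finset E} {e : E} {x : V} (he : e ∈ M) (hx : x ∈ edgeEnds e₁ e₂ e) :
    x ∈ matchedVerts e₁ e₂ M := Finset.mem_biUnion.2 ⟨e, he, hx⟩

lemma not_matched_of_erase {M : Finset E} {f : E} {x : V}
    (h1 : x ∉ matchedVerts e₁ e₂ (M.erase f)) (h2 : x ∉ edgeEnds e₁ e₂ f) :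
    x ∉ matchedVerts e₁ e₂ M := by
  intro hx
  obtain ⟨g, hg, hxg⟩ := Finset.mem_biUnion.1 hx
  by_cases hgf : g = f
  · exact h2 (hgf ▸ hxg)
  · exact h1 (Finset.mem_biUnion.2 ⟨g, Finset.mem_erase.2 ⟨hgf, hg⟩, hxg⟩)

lemma ne_of_disjoint_ends {f g : E} (h : Disjoint (edgeEnds e₁ e₂ f) (edgeEnds e₁ e₂ g)) :
    f ≠ g := by
  rintro rfl
  have h2 : e₁ f ∈ edgeEnds e₁ e₂ f := by simp [edgeEnds]
  exact Finset.disjoint_left.1 h h2 h2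

lemma matching_erase {M : Finset E} (h : IsMatchingE e₁ e₂ M) (e : E) :
    IsMatchingE e₁ e₂ (M.erase e) :=
  ⟨fun g hg => h.1 g (Finset.mem_of_mem_erase hg),
   fun a ha b hb hab => h.2 a (Finset.mem_of_mem_erase ha) b (Finset.mem_of_mem_erase hb) hab⟩

lemma card_matchedVerts {M : Finset E} (h : IsMatchingE e₁ e₂ M) :
    (matchedVerts e₁ e₂ M).card = 2 * M.card := by
  rw [matchedVerts, Finset.card_biUnion h.2]
  rw [Finset.sum_congr rfl (fun e he => edgeEnds_card (h.1 e he))]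
  simp [Nat.mul_comm]

lemma isAlt_mono {N₀ M₀ : Finset E} (hN : N₀ ⊆ N) (hM : M₀ ⊆ M')
    (hp : IsAltNMPath e₁ e₂ N₀ M₀ es) : IsAltNMPath e₁ e₂ N M' es := by
  obtain ⟨h1, h2, h3, h4, h5⟩ := hp
  refine ⟨h1, h2, fun i h => ?_, h4, h5⟩
  have := h3 i h
  split at this <;> simp_all
  exacts [hN this, hM this]

lemma alt_edge_mem {g : E} (hp : IsAltNMPath e₁ e₂ N M' es) (hg : g ∈ es) : g ∈ N ∪ M' := by
  obtain ⟨⟨i, hi⟩, rfl⟩ := List.mem_iff_get.1 hg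
  have := hp.2.2.1 i hi
  split at this
  · exact Finset.mem_union_left _ this
  · exact Finset.mem_union_right _ this

lemma alt_edge_nonloop {g : E} (hN : IsMatchingE e₁ e₂ N) (hM : IsMatchingE e₁ e₂ M')
    (hp : IsAltNMPath e₁ e₂ N M' es) (hg : g ∈ es) : e₁ g ≠ e₂ g := by
  rcases Finset.mem_union.1 (alt_edge_mem hp hg) with h | h
  · exact hN.1 g h
  · exact hM.1 g h

lemma alt_get_ne (hN : IsMatchingE e₁ e₂ N) (hM : IsMatchingE e₁ e₂ M')
    (hp : IsAltNMPath e₁ e₂ N M' es) {t u : ℕ} (htu : t < u) (hu : u < es.length) :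
    es.get ⟨t, htu.trans hu⟩ ≠ es.get ⟨u, hu⟩ := by
  rcases Nat.lt_or_ge (t + 1) u with h | h
  · have hd := hp.2.2.2.2 t u (htu.trans hu) hu (by omega)
    intro heq
    rw [heq] at hd
    exact Finset.disjoint_left.1 hd (show e₁ (es.get ⟨u, hu⟩) ∈ _ by simp [edgeEnds])
      (show e₁ (es.get ⟨u, hu⟩) ∈ _ by simp [edgeEnds])
  · have hu1 : u = t + 1 := by omega
    subst hu1
    have hc := hp.2.2.2.1 t hu
    intro heq
    rw [heq, Finset.inter_self] at hc
    rw [edgeEnds_card (alt_edge_nonloop hN hM hp (List.get_mem _ _))] at hc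
    omega

lemma isAlt_singleton {e : E} (he : e ∈ N) : IsAltNMPath e₁ e₂ N M' [e] := by
  refine ⟨by simp, by simp, fun i h => ?_, fun i h => absurd h (by simp), fun i j hi hj hij => by simp at hi hj; omega⟩
  have : i = 0 := by simpa using Nat.lt_one_iff.1 (by simpa using h)
  subst this
  simpa using he

lemma isAlt_reverse (hp : IsAltNMPath e₁ e₂ N M' es) : IsAltNMPath e₁ e₂ N M' es.reverse := by
  obtain ⟨h1, h2, h3, h4, h5⟩ := hp
  have hlen : es.reverse.length = es.length := List.length_reverse
  refine ⟨by simpa using h1, by simpa using h2, ?_, ?_, ?_⟩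
  · intro i h
    have hi : i < es.length := by omega
    have hpar : (es.length - 1 - i) % 2 = i % 2 := by omega
    have := h3 (es.length - 1 - i) (by omega)
    simp only [List.get_eq_getElem, List.getElem_reverse]
    simp only [hpar] at this
    convert this using 3 <;> rfl
  · intro i h
    have hi : i + 1 < es.length := by omega
    have hx := h4 (es.length - 2 - i) (show es.length - 2 - i + 1 < es.length by omega)
    simp only [List.get_eq_getElem, List.getElem_reverse]
    rw [Finset.inter_comm]
    have e1 : es.length - 1 - (i + 1) = es.length - 2 - i := by omega
    have e2 : es.length - 1 - i = es.length - 2 - i + 1 := by omega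
    simp_rw [e1, e2]
    exact hx
  · intro i j hi hj hij
    have hj' : j < es.length := by omega
    have hi' : i < es.length := by omega
    have := h5 (es.length - 1 - j) (es.length - 1 - i) (by omega) (by omega) (by omega)
    simp only [List.get_eq_getElem, List.getElem_reverse]
    exact this.symm

lemma free_reverse (hf : FreeEndpoints e₁ e₂ M' es) : FreeEndpoints e₁ e₂ M' es.reverse := by
  obtain ⟨h1, h2, h3⟩ := hf
  refine ⟨?_, ?_, ?_⟩
  · intro f hf'
    rw [List.head?_reverse] at hf'
    exact h2 f hf'
  · intro f hf'
    rw [List.getLast?_reverse] at hf'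
    exact h1 f hf'
  · intro f hf'
    rw [List.reverse_eq_iff] at hf'
    exact h3 f (by simpa using hf')

end Helpers

section Append
variable {V E : Type*} [DecidableEq V] {e₁ e₂ : E → V} {N M' : Finset E} {es : List E}

lemma get_append_two {f e : E} (i : ℕ) (h : i < es.length + 2) :
    (es ++ [f, e]).get ⟨i, by simp; omega⟩ =
      if h' : i < es.length then es.get ⟨i, h'⟩ else if i = es.length then f else e := by
  rcases lt_trichotomy i es.length with hc | hc | hc
  · simp [List.get_eq_getElem, List.getElem_append, hc]
  · subst hc
    simp [List.get_eq_getElem, List.getElem_append]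
  · have hi : i = es.length + 1 := by omega
    subst hi
    simp [List.get_eq_getElem, List.getElem_append, Nat.lt_irrefl,
      show es.length + 1 - es.length = 1 by omega]

lemma isAlt_append {f e : E} (hp : IsAltNMPath e₁ e₂ N M' es)
    (hfM : f ∈ M') (heN : e ∈ N)
    (h_gf : (edgeEnds e₁ e₂ (es.getLast hp.1) ∩ edgeEnds e₁ e₂ f).card = 1)
    (h_fe : (edgeEnds e₁ e₂ f ∩ edgeEnds e₁ e₂ e).card = 1)
    (h_df : ∀ i : ℕ, ∀ h : i + 1 < es.length,
      Disjoint (edgeEnds e₁ e₂ (es.get ⟨i, Nat.lt_of_succ_lt h⟩)) (edgeEnds e₁ e₂ f))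
    (h_de : ∀ g ∈ es, Disjoint (edgeEnds e₁ e₂ g) (edgeEnds e₁ e₂ e)) :
    IsAltNMPath e₁ e₂ N M' (es ++ [f, e]) := by
  obtain ⟨h1, h2, h3, h4, h5⟩ := hp
  have hne : es ≠ [] := h1
  have hlen : (es ++ [f, e]).length = es.length + 2 := by simp
  have hlen1 : 1 ≤ es.length := List.length_pos_iff.2 h1
  refine ⟨by simp, by simp [Nat.add_mod, h2], ?_, ?_, ?_⟩
  · intro i h
    have hi : i < es.length + 2 := by omega
    rw [get_append_two i hi]
    rcases lt_trichotomy i es.length with hc | hc | hc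
    · rw [dif_pos hc]
      exact h3 i hc
    · subst hc
      rw [dif_neg (show ¬ es.length < es.length by omega), if_pos rfl,
        if_neg (show ¬ es.length % 2 = 0 by omega)]
      exact hfM
    · have hi' : i = es.length + 1 := by omega
      subst hi'
      rw [dif_neg (show ¬ es.length + 1 < es.length by omega),
        if_neg (show ¬ es.length + 1 = es.length by omega),
        if_pos (show (es.length + 1) % 2 = 0 by omega)]
      exact heN
  · intro i h
    have hi : i < es.length + 2 := by omega
    have hi1 : i + 1 < es.length + 2 := by omega
    rw [get_append_two i hi, get_append_two (i + 1) hi1]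
    rcases lt_trichotomy (i + 1) es.length with hc | hc | hc
    · rw [dif_pos (show i < es.length by omega), dif_pos hc]
      exact h4 i hc
    · rw [dif_pos (show i < es.length by omega),
        dif_neg (show ¬ i + 1 < es.length by omega), if_pos hc]
      have hlast : es.getLast hne = es.get ⟨es.length - 1, by omega⟩ :=
        List.getLast_eq_getElem hne
      rw [hlast] at h_gf
      have : i = es.length - 1 := by omega
      subst this
      exact h_gf
    · have : i = es.length := by omega
      subst this
      rw [dif_neg (show ¬ es.length < es.length by omega), if_pos rfl,
        dif_neg (show ¬ es.length + 1 < es.length by omega),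
        if_neg (show ¬ es.length + 1 = es.length by omega)]
      exact h_fe
  · intro i j hi hj hij
    have hi' : i < es.length + 2 := by omega
    have hj' : j < es.length + 2 := by omega
    rw [get_append_two i hi', get_append_two j hj']
    rcases lt_trichotomy j es.length with hc | hc | hc
    · rw [dif_pos (show i < es.length by omega), dif_pos hc]
      exact h5 i j (by omega) hc hij
    · subst hc
      rw [dif_pos (show i < es.length by omega),
        dif_neg (show ¬ es.length < es.length by omega), if_pos rfl]
      exact h_df i (by omega)
    · have hj2 : j = es.length + 1 := by omega
      subst hj2
      rw [dif_pos (show i < es.length by omega),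
        dif_neg (show ¬ es.length + 1 < es.length by omega),
        if_neg (show ¬ es.length + 1 = es.length by omega)]
      exact h_de _ (List.get_mem _ _)

lemma free_append {f e : E} (hne : es ≠ [])
    (hw1 : ∃ u ∈ edgeEnds e₁ e₂ (es.head hne), u ∉ matchedVerts e₁ e₂ M')
    (hw2 : ∃ u ∈ edgeEnds e₁ e₂ e, u ∉ matchedVerts e₁ e₂ M') :
    FreeEndpoints e₁ e₂ M' (es ++ [f, e]) := by
  refine ⟨?_, ?_, ?_⟩
  · intro g hg
    rw [List.head?_append, List.head?_eq_head hne] at hg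
    obtain rfl : es.head hne = g := by simpa using hg
    exact hw1
  · intro g hg
    have : (es ++ [f, e]).getLast? = some e := by
      rw [show es ++ [f, e] = (es ++ [f]) ++ [e] by simp, List.getLast?_concat]
    rw [this] at hg
    obtain rfl : e = g := by simpa using hg
    exact hw2
  · intro g hg
    have := congrArg List.length hg
    simp at this

end Append

section Extend
variable {V E : Type*} [DecidableEq V] {e₁ e₂ : E → V} {N M' : Finset E}

lemma extend_path {P : List E} {e f : E} {u v w : V}
    (hp : IsAltNMPath e₁ e₂ (N.erase e) (M'.erase f) P)
    (hfree : FreeEndpoints e₁ e₂ (M'.erase f) P)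
    (heN : e ∈ N) (hfM : f ∈ M')
    (he_eq : edgeEnds e₁ e₂ e = {u, v}) (hf_eq : edgeEnds e₁ e₂ f = {u, w})
    (huw : u ≠ w) (hvw : v ≠ w)
    (hloop : ∀ g ∈ P, e₁ g ≠ e₂ g)
    (hu_not : ∀ g ∈ P, u ∉ edgeEnds e₁ e₂ g)
    (hv_not : ∀ g ∈ P, v ∉ edgeEnds e₁ e₂ g)
    (hv_free : v ∉ matchedVerts e₁ e₂ M')
    (hw_last : w ∈ edgeEnds e₁ e₂ (P.getLast hp.1))
    (hw_only : ∀ t : ℕ, ∀ h : t + 1 < P.length,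
      w ∉ edgeEnds e₁ e₂ (P.get ⟨t, Nat.lt_of_succ_lt h⟩)) :
    IsAltNMPath e₁ e₂ N M' (P ++ [f, e]) ∧ FreeEndpoints e₁ e₂ M' (P ++ [f, e]) := by
  have hne : P ≠ [] := hp.1
  have hlast_mem : P.getLast hne ∈ P := List.getLast_mem hne
  have hp' : IsAltNMPath e₁ e₂ N M' P :=
    isAlt_mono (Finset.erase_subset _ _) (Finset.erase_subset _ _) hp
  have h_gf : (edgeEnds e₁ e₂ (P.getLast hp'.1) ∩ edgeEnds e₁ e₂ f).card = 1 := by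
    rw [hf_eq]
    have heq : edgeEnds e₁ e₂ (P.getLast hne) ∩ {u, w} = {w} := by
      ext x
      simp only [Finset.mem_inter, Finset.mem_insert, Finset.mem_singleton]
      constructor
      · rintro ⟨hx, rfl | rfl⟩
        · exact absurd hx (hu_not _ hlast_mem)
        · rfl
      · rintro rfl
        exact ⟨hw_last, Or.inr rfl⟩
    rw [show P.getLast hp'.1 = P.getLast hne from rfl, heq, Finset.card_singleton]
  have h_fe : (edgeEnds e₁ e₂ f ∩ edgeEnds e₁ e₂ e).card = 1 := by
    rw [hf_eq, he_eq]
    have heq : ({u, w} : Finset V) ∩ {u, v} = {u} := by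
      ext x
      simp only [Finset.mem_inter, Finset.mem_insert, Finset.mem_singleton]
      constructor
      · rintro ⟨rfl | rfl, h2 | h2⟩ <;> tauto
      · rintro rfl
        exact ⟨Or.inl rfl, Or.inl rfl⟩
    rw [heq, Finset.card_singleton]
  have h_df : ∀ i : ℕ, ∀ h : i + 1 < P.length,
      Disjoint (edgeEnds e₁ e₂ (P.get ⟨i, Nat.lt_of_succ_lt h⟩)) (edgeEnds e₁ e₂ f) := by
    intro i h
    rw [hf_eq]
    rw [Finset.disjoint_right]
    intro x hx
    simp only [Finset.mem_insert, Finset.mem_singleton] at hx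
    rcases hx with rfl | rfl
    · exact hu_not _ (List.get_mem _ _)
    · exact hw_only i h
  have h_de : ∀ g ∈ P, Disjoint (edgeEnds e₁ e₂ g) (edgeEnds e₁ e₂ e) := by
    intro g hg
    rw [he_eq, Finset.disjoint_right]
    intro x hx
    simp only [Finset.mem_insert, Finset.mem_singleton] at hx
    rcases hx with rfl | rfl
    · exact hu_not _ hg
    · exact hv_not _ hg
  refine ⟨isAlt_append hp' hfM heN h_gf h_fe h_df h_de, ?_⟩
  refine free_append hne ?_ ⟨v, by rw [he_eq]; simp, hv_free⟩
  have hhead_mem : P.head hne ∈ P := List.head_mem hne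
  rcases Nat.lt_or_ge P.length 2 with hl | hl
  · -- singleton path
    have hP1 : P.length = 1 := by
      have := List.length_pos_iff.2 hne; omega
    obtain ⟨a, ha⟩ := List.length_eq_one_iff.1 hP1
    have hahead : P.head hne = a := by simp [ha]
    have hcard : 1 < (edgeEnds e₁ e₂ a).card := by
      rw [edgeEnds_card (hloop a (by simp [ha]))]
      omega
    obtain ⟨x, hx_mem, hx_ne⟩ := Finset.exists_mem_ne hcard w
    refine ⟨x, by rw [hahead]; exact hx_mem, ?_⟩
    have hx_u : x ≠ u := by
      rintro rfl
      exact hu_not a (by simp [ha]) hx_mem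
    refine not_matched_of_erase (hfree.2.2 a ha x hx_mem) ?_
    rw [hf_eq]
    simp [hx_u, hx_ne]
  · -- length ≥ 2
    obtain ⟨x, hx_mem, hx_free⟩ := hfree.1 (P.head hne) (List.head?_eq_head hne)
    refine ⟨x, hx_mem, ?_⟩
    have hx0 : x ∈ edgeEnds e₁ e₂ (P.get ⟨0, by omega⟩) := by
      rwa [List.get_eq_getElem, ← List.head_eq_getElem hne]
    have hx_w : x ≠ w := by
      rintro rfl
      exact hw_only 0 (by omega) hx0
    have hx_u : x ≠ u := by
      rintro rfl
      exact hu_not _ hhead_mem hx_mem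
    refine not_matched_of_erase hx_free ?_
    rw [hf_eq]
    simp [hx_u, hx_w]

end Extend

section MainLemma
variable {V E : Type*} [DecidableEq V] {e₁ e₂ : E → V} {N M' : Finset E}

lemma free_upgrade {es : List E} {f : E} {u w : V}
    (hfree : FreeEndpoints e₁ e₂ (M'.erase f) es)
    (hf_eq : edgeEnds e₁ e₂ f = {u, w})
    (hu : ∀ g ∈ es, u ∉ edgeEnds e₁ e₂ g)
    (hw : ∀ g ∈ es, w ∉ edgeEnds e₁ e₂ g) :
    FreeEndpoints e₁ e₂ M' es := by
  refine ⟨?_, ?_, ?_⟩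
  · intro g hg
    obtain ⟨x, hx1, hx2⟩ := hfree.1 g hg
    have hmem : g ∈ es := List.mem_of_mem_head? hg
    refine ⟨x, hx1, not_matched_of_erase hx2 ?_⟩
    rw [hf_eq]
    simp only [Finset.mem_insert, Finset.mem_singleton]
    rintro (rfl | rfl)
    exacts [hu g hmem hx1, hw g hmem hx1]
  · intro g hg
    obtain ⟨x, hx1, hx2⟩ := hfree.2.1 g hg
    have hmem : g ∈ es := List.mem_of_mem_getLast? hg
    refine ⟨x, hx1, not_matched_of_erase hx2 ?_⟩
    rw [hf_eq]
    simp only [Finset.mem_insert, Finset.mem_singleton]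
    rintro (rfl | rfl)
    exacts [hu g hmem hx1, hw g hmem hx1]
  · intro g hg x hx
    have hmem : g ∈ es := by rw [hg]; simp
    refine not_matched_of_erase (hfree.2.2 g hg x hx) ?_
    rw [hf_eq]
    simp only [Finset.mem_insert, Finset.mem_singleton]
    rintro (rfl | rfl)
    exacts [hu g hmem hx, hw g hmem hx]

lemma part1_aux (e₁ e₂ : E → V) :
    ∀ (n : ℕ) (N M' : Finset E) (s : ℕ), N.card ≤ n →
    IsMatchingE e₁ e₂ N → IsMatchingE e₁ e₂ M' → M'.card + s ≤ N.card →
    ∃ (k : ℕ) (paths : Fin k → List E), s ≤ k ∧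
      (∀ i, IsAltNMPath e₁ e₂ N M' (paths i) ∧ FreeEndpoints e₁ e₂ M' (paths i)) ∧
      (∀ i j, i ≠ j → ∀ f ∈ paths i, ∀ g ∈ paths j,
        Disjoint (edgeEnds e₁ e₂ f) (edgeEnds e₁ e₂ g)) := by
  intro n
  induction n with
  | zero =>
    intro N M' s hn hNm hMm hs
    exact ⟨0, fun _ => [], by omega, fun i => i.elim0, fun i => i.elim0⟩
  | succ n ih =>
    intro N M' s hn hNm hMm hs
    rcases Nat.eq_zero_or_pos s with rfl | hs1
    · exact ⟨0, fun _ => [], le_refl 0, fun i => i.elim0, fun i => i.elim0⟩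
    by_cases hA : ∃ e ∈ N, ∀ x ∈ edgeEnds e₁ e₂ e, x ∉ matchedVerts e₁ e₂ M'
    · -- Case A: an N-edge with both endpoints free
      obtain ⟨e, heN, hefree⟩ := hA
      have hcard : (N.erase e).card ≤ n := by
        rw [Finset.card_erase_of_mem heN]; omega
      have hs' : M'.card + (s - 1) ≤ (N.erase e).card := by
        rw [Finset.card_erase_of_mem heN]; omega
      obtain ⟨k, paths, hk, hprops, hdisj⟩ :=
        ih (N.erase e) M' (s - 1) hcard (matching_erase hNm e) hMm hs'
      have hedge : ∀ (j : Fin k), ∀ g ∈ paths j, g ∈ N.erase e ∪ M' :=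
        fun j g hg => alt_edge_mem (hprops j).1 hg
      have hdisj_e : ∀ (j : Fin k), ∀ g ∈ paths j,
          Disjoint (edgeEnds e₁ e₂ g) (edgeEnds e₁ e₂ e) := by
        intro j g hg
        rcases Finset.mem_union.1 (hedge j g hg) with h | h
        · exact (hNm.2 e heN g (Finset.mem_of_mem_erase h)
            (Finset.ne_of_mem_erase h).symm).symm
        · rw [Finset.disjoint_right]
          intro x hx
          exact fun hxg => hefree x hx (mem_matched h hxg)
      refine ⟨k + 1, Fin.snoc paths [e], by omega, ?_, ?_⟩
      · intro i
        refine Fin.lastCases ?_ ?_ i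
        · rw [Fin.snoc_last]
          refine ⟨isAlt_singleton heN, ?_, ?_, ?_⟩
          · intro g hg
            obtain rfl : e = g := by simpa using hg
            exact ⟨e₁ e, by simp [edgeEnds], hefree _ (by simp [edgeEnds])⟩
          · intro g hg
            obtain rfl : e = g := by simpa using hg
            exact ⟨e₁ e, by simp [edgeEnds], hefree _ (by simp [edgeEnds])⟩
          · intro g hg
            obtain rfl : e = g := by simpa using hg
            exact hefree
        · intro i'
          rw [Fin.snoc_castSucc]
          exact ⟨isAlt_mono (Finset.erase_subset _ _) (Finset.Subset.refl _) (hprops i').1,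
            (hprops i').2⟩
      · have key : ∀ (j : Fin k), ∀ p ∈ ([e] : List E), ∀ q ∈ paths j,
            Disjoint (edgeEnds e₁ e₂ p) (edgeEnds e₁ e₂ q) := by
          intro j p hp q hq
          obtain rfl : p = e := by simpa using hp
          exact (hdisj_e j q hq).symm
        intro i j hij
        rcases Fin.eq_castSucc_or_eq_last i with ⟨i', rfl⟩ | rfl <;>
          rcases Fin.eq_castSucc_or_eq_last j with ⟨j', rfl⟩ | rfl
        · rw [Fin.snoc_castSucc, Fin.snoc_castSucc]
          exact hdisj i' j' (fun h => hij (congrArg Fin.castSucc h))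
        · rw [Fin.snoc_castSucc, Fin.snoc_last]
          intro p hp q hq
          exact (key i' q hq p hp).symm
        · rw [Fin.snoc_last, Fin.snoc_castSucc]
          exact key j'
        · exact absurd rfl hij
    push_neg at hA
    by_cases hB : ∃ e ∈ N, ∃ x ∈ edgeEnds e₁ e₂ e, x ∉ matchedVerts e₁ e₂ M'
    · -- Case B
      obtain ⟨e, heN, v, hv_e, hv_free⟩ := hB
      obtain ⟨u, hu_e, hu_cov⟩ := hA e heN
      have huv : u ≠ v := fun h => hv_free (h ▸ hu_cov)
      obtain ⟨f, hfM, hu_f⟩ := Finset.mem_biUnion.1 hu_cov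
      have hnloopf := hMm.1 f hfM
      have hnloope := hNm.1 e heN
      obtain ⟨w, hw_f, hwu⟩ := Finset.exists_mem_ne
        (by rw [edgeEnds_card hnloopf]; omega) u
      have huw : u ≠ w := hwu.symm
      have he_eq : edgeEnds e₁ e₂ e = {u, v} := by
        refine (Finset.eq_of_subset_of_card_le ?_ ?_).symm
        · intro x hx
          simp only [Finset.mem_insert, Finset.mem_singleton] at hx
          rcases hx with rfl | rfl
          exacts [hu_e, hv_e]
        · rw [edgeEnds_card hnloope,
            Finset.card_insert_of_notMem (by simpa using huv), Finset.card_singleton]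
      have hf_eq : edgeEnds e₁ e₂ f = {u, w} := by
        refine (Finset.eq_of_subset_of_card_le ?_ ?_).symm
        · intro x hx
          simp only [Finset.mem_insert, Finset.mem_singleton] at hx
          rcases hx with rfl | rfl
          exacts [hu_f, hw_f]
        · rw [edgeEnds_card hnloopf,
            Finset.card_insert_of_notMem (by simpa using huw), Finset.card_singleton]
      have hvw : v ≠ w := by
        rintro rfl
        exact hv_free (mem_matched hfM hw_f)
      have hM1 : 1 ≤ M'.card := Finset.card_pos.2 ⟨f, hfM⟩
      have hcard : (N.erase e).card ≤ n := by rw [Finset.card_erase_of_mem heN]; omega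
      have hs' : (M'.erase f).card + s ≤ (N.erase e).card := by
        rw [Finset.card_erase_of_mem heN, Finset.card_erase_of_mem hfM]; omega
      obtain ⟨k, paths, hk, hprops, hdisj⟩ :=
        ih (N.erase e) (M'.erase f) s hcard (matching_erase hNm e) (matching_erase hMm f) hs'
      have hedge : ∀ (j : Fin k), ∀ g ∈ paths j, g ∈ N.erase e ∪ M'.erase f :=
        fun j g hg => alt_edge_mem (hprops j).1 hg
      have hloopP : ∀ (j : Fin k), ∀ g ∈ paths j, e₁ g ≠ e₂ g := by
        intro j g hg
        rcases Finset.mem_union.1 (hedge j g hg) with h | h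
        exacts [hNm.1 g (Finset.mem_of_mem_erase h), hMm.1 g (Finset.mem_of_mem_erase h)]
      have hnoM : ∀ g ∈ M'.erase f, w ∉ edgeEnds e₁ e₂ g := fun g h =>
        Finset.disjoint_left.1
          (hMm.2 f hfM g (Finset.mem_of_mem_erase h) (Finset.ne_of_mem_erase h).symm) hw_f
      have hu_not : ∀ (j : Fin k), ∀ g ∈ paths j, u ∉ edgeEnds e₁ e₂ g := by
        intro j g hg
        rcases Finset.mem_union.1 (hedge j g hg) with h | h
        · exact Finset.disjoint_left.1
            (hNm.2 e heN g (Finset.mem_of_mem_erase h) (Finset.ne_of_mem_erase h).symm) hu_e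
        · exact Finset.disjoint_left.1
            (hMm.2 f hfM g (Finset.mem_of_mem_erase h) (Finset.ne_of_mem_erase h).symm) hu_f
      have hv_not : ∀ (j : Fin k), ∀ g ∈ paths j, v ∉ edgeEnds e₁ e₂ g := by
        intro j g hg
        rcases Finset.mem_union.1 (hedge j g hg) with h | h
        · exact Finset.disjoint_left.1
            (hNm.2 e heN g (Finset.mem_of_mem_erase h) (Finset.ne_of_mem_erase h).symm) hv_e
        · exact fun hx => hv_free (mem_matched (Finset.mem_of_mem_erase h) hx)
      have hw_M : ∀ (j : Fin k), ∀ g ∈ paths j, w ∈ edgeEnds e₁ e₂ g → g ∈ N.erase e := by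
        intro j g hg hw'
        rcases Finset.mem_union.1 (hedge j g hg) with h | h
        · exact h
        · exact absurd hw' (hnoM g h)
      by_cases hw_ex : ∃ (j : Fin k), ∃ g ∈ paths j, w ∈ edgeEnds e₁ e₂ g
      · -- some path touches w: extend that path through f and e
        obtain ⟨i₀, g₀, hg₀, hwg₀⟩ := hw_ex
        have hg₀N : g₀ ∈ N.erase e := hw_M i₀ g₀ hg₀ hwg₀
        have hw_unique : ∀ (j : Fin k), ∀ g ∈ paths j, w ∈ edgeEnds e₁ e₂ g →
            j = i₀ ∧ g = g₀ := by
          intro j g hg hw'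
          have hgN : g ∈ N.erase e := hw_M j g hg hw'
          have hgg₀ : g = g₀ := by
            by_contra hne'
            exact Finset.disjoint_left.1
              (hNm.2 g (Finset.mem_of_mem_erase hgN) g₀ (Finset.mem_of_mem_erase hg₀N) hne')
              hw' hwg₀
          subst hgg₀
          refine ⟨?_, rfl⟩
          by_contra hne'
          exact Finset.disjoint_left.1 (hdisj j i₀ hne' g hg g hg₀) hw' hw'
        have hPalt := (hprops i₀).1
        have hPfree := (hprops i₀).2
        obtain ⟨⟨t₀, ht₀⟩, hPt₀⟩ := List.mem_iff_get.1 hg₀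
        have hw_idx : ∀ t (h : t < (paths i₀).length),
            w ∈ edgeEnds e₁ e₂ ((paths i₀).get ⟨t, h⟩) → t = t₀ := by
          intro t h hwt
          have hgeq := (hw_unique i₀ _ (List.get_mem _ _) hwt).2
          rw [← hPt₀] at hgeq
          by_contra hne'
          rcases Nat.lt_or_ge t t₀ with hlt | hge
          · exact alt_get_ne (matching_erase hNm e) (matching_erase hMm f) hPalt hlt ht₀ hgeq
          · exact alt_get_ne (matching_erase hNm e) (matching_erase hMm f) hPalt
              (show t₀ < t by omega) h hgeq.symm
        have ht₀_even : t₀ % 2 = 0 := by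
          by_contra hodd
          have hmem := hPalt.2.2.1 t₀ ht₀
          rw [if_neg hodd] at hmem
          exact hnoM _ hmem (hPt₀ ▸ hwg₀)
        have ht₀_end : t₀ = 0 ∨ t₀ = (paths i₀).length - 1 := by
          by_contra hcon
          push_neg at hcon
          obtain ⟨hc0, hcl⟩ := hcon
          have h2 : t₀ + 1 < (paths i₀).length := by omega
          have h1 : 1 ≤ t₀ := Nat.pos_of_ne_zero hc0
          have hx' := hPalt.2.2.2.1 (t₀ - 1) (show t₀ - 1 + 1 < (paths i₀).length by omega)
          simp only [show t₀ - 1 + 1 = t₀ from by omega] at hx'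
          obtain ⟨x, hx⟩ := Finset.card_eq_one.1 hx'
          obtain ⟨y, hy⟩ := Finset.card_eq_one.1 (hPalt.2.2.2.1 t₀ h2)
          have hxm := Finset.mem_singleton_self x
          rw [← hx, Finset.mem_inter] at hxm
          have hym := Finset.mem_singleton_self y
          rw [← hy, Finset.mem_inter] at hym
          have hdxy := hPalt.2.2.2.2 (t₀ - 1) (t₀ + 1) (by omega) h2 (by omega)
          have hxy : x ≠ y := by
            rintro rfl
            exact Finset.disjoint_left.1 hdxy hxm.1 hym.2
          have hsub : ({x, y} : Finset V) ⊆ edgeEnds e₁ e₂ ((paths i₀).get ⟨t₀, ht₀⟩) := by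
            intro z hz
            simp only [Finset.mem_insert, Finset.mem_singleton] at hz
            rcases hz with rfl | rfl
            exacts [hxm.2, hym.1]
          have hEeq : ({x, y} : Finset V) = edgeEnds e₁ e₂ ((paths i₀).get ⟨t₀, ht₀⟩) :=
            Finset.eq_of_subset_of_card_le hsub (by
              rw [edgeEnds_card (hloopP i₀ _ (List.get_mem _ _)),
                Finset.card_insert_of_notMem (by simpa using hxy), Finset.card_singleton])
          have hwxy : w ∈ ({x, y} : Finset V) := by
            rw [hEeq, hPt₀]
            exact hwg₀
          simp only [Finset.mem_insert, Finset.mem_singleton] at hwxy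
          rcases hwxy with rfl | rfl
          · -- w = x lies in edge t₀ - 1, which is in M'.erase f
            have hmem := hPalt.2.2.1 (t₀ - 1) (by omega)
            rw [if_neg (show ¬(t₀ - 1) % 2 = 0 by omega)] at hmem
            exact hnoM _ hmem hxm.1
          · have hmem := hPalt.2.2.1 (t₀ + 1) h2
            rw [if_neg (show ¬(t₀ + 1) % 2 = 0 by omega)] at hmem
            exact hnoM _ hmem hym.2
        obtain ⟨P', hP'alt, hP'free, hP'mem⟩ :
            ∃ P', IsAltNMPath e₁ e₂ N M' P' ∧ FreeEndpoints e₁ e₂ M' P' ∧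
              ∀ g ∈ P', g ∈ paths i₀ ∨ g = f ∨ g = e := by
          rcases ht₀_end with ht0 | htl
          · -- t₀ = 0: extend the reverse
            subst ht0
            have hrevalt := isAlt_reverse hPalt
            have hrevfree := free_reverse hPfree
            have hrevne : (paths i₀).reverse ≠ [] := hrevalt.1
            have hw_last : w ∈ edgeEnds e₁ e₂ ((paths i₀).reverse.getLast hrevne) := by
              rw [List.getLast_reverse, List.head_eq_getElem]
              show w ∈ edgeEnds e₁ e₂ ((paths i₀).get ⟨0, ht₀⟩)
              rw [hPt₀]; exact hwg₀
            have hw_only : ∀ t : ℕ, ∀ h : t + 1 < (paths i₀).reverse.length,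
                w ∉ edgeEnds e₁ e₂ ((paths i₀).reverse.get ⟨t, Nat.lt_of_succ_lt h⟩) := by
              intro t h hw'
              have hlenr : (paths i₀).reverse.length = (paths i₀).length :=
                List.length_reverse
              rw [List.get_eq_getElem, List.getElem_reverse] at hw'
              have := hw_idx ((paths i₀).length - 1 - t) (by omega)
                (by rw [List.get_eq_getElem]; exact hw')
              omega
            obtain ⟨ha, hf'⟩ := extend_path hrevalt hrevfree heN hfM he_eq hf_eq huw hvw
              (fun g hg => hloopP i₀ g (List.mem_reverse.1 hg))
              (fun g hg => hu_not i₀ g (List.mem_reverse.1 hg))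
              (fun g hg => hv_not i₀ g (List.mem_reverse.1 hg))
              hv_free hw_last hw_only
            refine ⟨_, ha, hf', ?_⟩
            intro g hg
            rcases List.mem_append.1 hg with h | h
            · exact Or.inl (List.mem_reverse.1 h)
            · simp only [List.mem_cons, List.mem_singleton, List.not_mem_nil, or_false] at h
              tauto
          · -- t₀ = length - 1: extend directly
            have hne : paths i₀ ≠ [] := hPalt.1
            have hw_last : w ∈ edgeEnds e₁ e₂ ((paths i₀).getLast hne) := by
              rw [List.getLast_eq_getElem]
              change w ∈ edgeEnds e₁ e₂ ((paths i₀).get ⟨(paths i₀).length - 1, by omega⟩)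
              have : (paths i₀).get ⟨(paths i₀).length - 1, by omega⟩ = g₀ := by
                rw [← hPt₀]
                congr 1
                exact Fin.ext htl.symm
              rw [this]
              exact hwg₀
            have hw_only : ∀ t : ℕ, ∀ h : t + 1 < (paths i₀).length,
                w ∉ edgeEnds e₁ e₂ ((paths i₀).get ⟨t, Nat.lt_of_succ_lt h⟩) := by
              intro t h hw'
              have := hw_idx t (by omega) hw'
              omega
            obtain ⟨ha, hf'⟩ := extend_path hPalt hPfree heN hfM he_eq hf_eq huw hvw
              (hloopP i₀) (hu_not i₀) (hv_not i₀) hv_free hw_last hw_only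
            refine ⟨_, ha, hf', ?_⟩
            intro g hg
            rcases List.mem_append.1 hg with h | h
            · exact Or.inl h
            · simp only [List.mem_cons, List.mem_singleton, List.not_mem_nil, or_false] at h
              tauto
        refine ⟨k, Function.update paths i₀ P', hk, ?_, ?_⟩
        · intro i
          rcases eq_or_ne i i₀ with rfl | hne'
          · rw [Function.update_self]
            exact ⟨hP'alt, hP'free⟩
          · rw [Function.update_of_ne hne']
            refine ⟨isAlt_mono (Finset.erase_subset _ _) (Finset.erase_subset _ _)
              (hprops i).1, free_upgrade (hprops i).2 hf_eq (hu_not i) ?_⟩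
            intro g hg hwg
            exact hne' (hw_unique i g hg hwg).1
        · have key : ∀ (j : Fin k), j ≠ i₀ → ∀ p ∈ P', ∀ q ∈ paths j,
              Disjoint (edgeEnds e₁ e₂ p) (edgeEnds e₁ e₂ q) := by
            intro j hj p hpm q hq
            rcases hP'mem p hpm with hp0 | rfl | rfl
            · exact hdisj i₀ j (Ne.symm hj) p hp0 q hq
            · rw [hf_eq, Finset.disjoint_left]
              intro x hx
              simp only [Finset.mem_insert, Finset.mem_singleton] at hx
              rcases hx with rfl | rfl
              · exact hu_not j q hq
              · exact fun hwq => hj (hw_unique j q hq hwq).1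
            · rw [he_eq, Finset.disjoint_left]
              intro x hx
              simp only [Finset.mem_insert, Finset.mem_singleton] at hx
              rcases hx with rfl | rfl
              · exact hu_not j q hq
              · exact hv_not j q hq
          intro i j hij p hpm q hqm
          rcases eq_or_ne i i₀ with rfl | hi0
          · rcases eq_or_ne j i with rfl | hj0
            · exact absurd rfl hij
            · rw [Function.update_self] at hpm
              rw [Function.update_of_ne hj0] at hqm
              exact key j hj0 p hpm q hqm
          · rcases eq_or_ne j i₀ with rfl | hj0
            · rw [Function.update_self] at hqm
              rw [Function.update_of_ne hi0] at hpm
              exact (key i hi0 q hqm p hpm).symm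
            · rw [Function.update_of_ne hi0] at hpm
              rw [Function.update_of_ne hj0] at hqm
              exact hdisj i j hij p hpm q hqm
      · -- no path touches w: the family already works
        push_neg at hw_ex
        refine ⟨k, paths, hk, ?_, hdisj⟩
        intro i
        exact ⟨isAlt_mono (Finset.erase_subset _ _) (Finset.erase_subset _ _) (hprops i).1,
          free_upgrade (hprops i).2 hf_eq (hu_not i) (hw_ex i)⟩
    · -- neither: every endpoint of N covered, contradiction
      exfalso
      push_neg at hB
      have hsub : matchedVerts e₁ e₂ N ⊆ matchedVerts e₁ e₂ M' := by
        intro x hx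
        obtain ⟨g, hg, hxg⟩ := Finset.mem_biUnion.1 hx
        exact hB g hg x hxg
      have h1 := Finset.card_le_card hsub
      rw [card_matchedVerts hNm, card_matchedVerts hMm] at h1
      omega

end MainLemma

/-- if `N` and `M'` are matchings with `|N| ≥ |M'| + s`, their union
contains at least `s` vertex-disjoint `N-M'-⋯-M'-N` alternating paths with both
endpoints uncovered by `M'`; moreover, for every `L > 2`, at least
`s - 2|M'|/(L-2)` of them can be taken of length at most `L`. -/
theorem stmt_15 {V E : Type*} [Fintype V] [DecidableEq V] [Fintype E]
    (e₁ e₂ : E → V) (N M' : Finset E) (s : ℕ)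
    (hN : IsMatchingE e₁ e₂ N) (hM' : IsMatchingE e₁ e₂ M')
    (hs : M'.card + s ≤ N.card) :
    (∃ (k : ℕ) (paths : Fin k → List E), s ≤ k ∧
      (∀ i, IsAltNMPath e₁ e₂ N M' (paths i) ∧ FreeEndpoints e₁ e₂ M' (paths i)) ∧
      (∀ i j, i ≠ j → ∀ f ∈ paths i, ∀ g ∈ paths j,
        Disjoint (edgeEnds e₁ e₂ f) (edgeEnds e₁ e₂ g))) ∧
    ∀ L : ℕ, 2 < L →
      ∃ (k : ℕ) (paths : Fin k → List E),
        (s : ℝ) - 2 * (M'.card : ℝ) / ((L : ℝ) - 2) ≤ (k : ℝ) ∧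
        (∀ i, IsAltNMPath e₁ e₂ N M' (paths i) ∧ FreeEndpoints e₁ e₂ M' (paths i) ∧
          (paths i).length ≤ L) ∧
        (∀ i j, i ≠ j → ∀ f ∈ paths i, ∀ g ∈ paths j,
          Disjoint (edgeEnds e₁ e₂ f) (edgeEnds e₁ e₂ g)) := by
  obtain ⟨k, paths, hk, hprops, hdisj⟩ :=
    part1_aux e₁ e₂ N.card N M' s le_rfl hN hM' hs
  refine ⟨⟨k, paths, hk, hprops, hdisj⟩, ?_⟩
  intro L hL
  set T : Finset (Fin k) := Finset.univ.filter (fun i => (paths i).length ≤ L) with hT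
  set S : Finset (Fin k) := Finset.univ.filter (fun i => ¬ (paths i).length ≤ L) with hS
  have hMi : ∀ i ∈ S, L / 2 ≤ ((paths i).toFinset ∩ M').card := by
    intro i hi
    have hlen : L < (paths i).length := by
      have := (Finset.mem_filter.1 hi).2
      omega
    have hne : paths i ≠ [] := (hprops i).1.1
    refine le_trans (le_of_eq (Finset.card_range (L / 2)).symm)
      (Finset.card_le_card_of_injOn
        (fun j => (paths i).getD (2 * j + 1) ((paths i).head hne)) ?_ ?_)
    · intro j hj
      have hjl : 2 * j + 1 < (paths i).length := by
        have := Finset.mem_range.1 hj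
        omega
      dsimp only
      rw [List.getD_eq_getElem _ _ hjl]
      refine Finset.mem_inter.2 ⟨List.mem_toFinset.2 (List.getElem_mem _), ?_⟩
      have hmem := (hprops i).1.2.2.1 (2 * j + 1) hjl
      rw [if_neg (by omega)] at hmem
      rw [List.get_eq_getElem] at hmem
      exact hmem
    · intro a ha b hb hab
      simp only [Finset.coe_range, Set.mem_Iio] at ha hb
      have hal : 2 * a + 1 < (paths i).length := by omega
      have hbl : 2 * b + 1 < (paths i).length := by omega
      dsimp only at hab
      rw [List.getD_eq_getElem _ _ hal, List.getD_eq_getElem _ _ hbl] at hab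
      by_contra hne'
      rcases Nat.lt_or_ge a b with h | h
      · exact alt_get_ne hN hM' (hprops i).1 (show 2 * a + 1 < 2 * b + 1 by omega) hbl
          (by simpa using hab)
      · exact alt_get_ne hN hM' (hprops i).1 (show 2 * b + 1 < 2 * a + 1 by omega) hal
          (by simpa using hab.symm)
  have hpair : ∀ i ∈ S, ∀ j ∈ S, i ≠ j →
      Disjoint ((paths i).toFinset ∩ M') ((paths j).toFinset ∩ M') := by
    intro i _ j _ hij
    rw [Finset.disjoint_left]
    intro g hg1 hg2
    have h1 := List.mem_toFinset.1 (Finset.mem_inter.1 hg1).1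
    have h2 := List.mem_toFinset.1 (Finset.mem_inter.1 hg2).1
    have hd := hdisj i j hij g h1 g h2
    exact Finset.disjoint_left.1 hd (show e₁ g ∈ edgeEnds e₁ e₂ g by simp [edgeEnds])
      (show e₁ g ∈ edgeEnds e₁ e₂ g by simp [edgeEnds])
  have hsum : S.card * (L / 2) ≤ M'.card := by
    calc S.card * (L / 2) = S.card • (L / 2) := by simp
    _ ≤ ∑ i ∈ S, ((paths i).toFinset ∩ M').card := Finset.card_nsmul_le_sum S _ _ hMi
    _ = (S.biUnion fun i => (paths i).toFinset ∩ M').card := (Finset.card_biUnion hpair).symm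
    _ ≤ M'.card := by
        refine Finset.card_le_card ?_
        intro g hg
        obtain ⟨i, _, hgi⟩ := Finset.mem_biUnion.1 hg
        exact (Finset.mem_inter.1 hgi).2
  have hcardk : T.card + S.card = k := by
    rw [hT, hS, Finset.card_filter_add_card_filter_not, Finset.card_univ,
      Fintype.card_fin]
  have hL2 : (0 : ℝ) < (L : ℝ) - 2 := by
    have : (2 : ℝ) < L := by exact_mod_cast hL
    linarith
  have hSb : (S.card : ℝ) ≤ 2 * (M'.card : ℝ) / ((L : ℝ) - 2) := by
    rw [le_div_iff₀ hL2]
    have hdiv : (L : ℝ) - 2 ≤ 2 * ((L / 2 : ℕ) : ℝ) := by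
      have h2 : L ≤ 2 * (L / 2) + 2 := by omega
      have h3 : (L : ℝ) ≤ 2 * ((L / 2 : ℕ) : ℝ) + 2 := by exact_mod_cast h2
      linarith
    have h1 : (S.card : ℝ) * ((L : ℝ) - 2) ≤ (S.card : ℝ) * (2 * ((L / 2 : ℕ) : ℝ)) :=
      mul_le_mul_of_nonneg_left hdiv (by positivity)
    have h2 : ((S.card * (L / 2) : ℕ) : ℝ) ≤ (M'.card : ℝ) := by exact_mod_cast hsum
    push_cast at h2
    linarith
  refine ⟨T.card, fun i => paths (T.equivFin.symm i), ?_, ?_, ?_⟩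
  · have hk' : (s : ℝ) ≤ (k : ℝ) := by exact_mod_cast hk
    have hck : (T.card : ℝ) + (S.card : ℝ) = (k : ℝ) := by exact_mod_cast hcardk
    linarith
  · intro i
    have hmem := (T.equivFin.symm i).2
    exact ⟨(hprops _).1, (hprops _).2, (Finset.mem_filter.1 hmem).2⟩
  · intro i j hij p hpm q hqm
    exact hdisj _ _ (fun hval => hij (T.equivFin.symm.injective (Subtype.ext hval))) p hpm q hqm
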